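/- Let A be an affine subspace of R^D and X^(out) a finite set of points in R^D \ A. If A intersects conv(X^(out)) and x_j lies in the relative interior of conv(X^(in) \ {x_j}) with X^(in) ⊆ A finite, then there exists an optimal solution of the ASSC problem for x_j (with dictionary (X^(in) \ {x_j}) ∪ X^(out)) that has a nonzero coefficient on some point of X^(out), i.e., a non-subspace-preserving optimal solution exists. -/

import Mathlib

/-- The "only if" direction: if the affine subspace A intersects conv(X^(out)),
then there exists an optimal solution of the ASSC problem for a relative interior
point x_j that uses a point of X^(out) with nonzero coefficient. -/
theorem stmt12 (D : ℕ) (A : AffineSubspace ℝ (Fin D → ℝ))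
    (Xin Xout : Finset (Fin D → ℝ))
    (hXin : (Xin : Set (Fin D → ℝ)) ⊆ (A : Set (Fin D → ℝ)))
    (hXout : ∀ y ∈ Xout, y ∉ A)
    (xj : Fin D → ℝ)
    (hx : xj ∈ intrinsicInterior ℝ (convexHull ℝ ((Xin.erase xj : Finset _) : Set (Fin D → ℝ))))
    (hspan : affineSpan ℝ ((Xin.erase xj : Finset _) : Set (Fin D → ℝ)) = A)
    (hint : ((A : Set (Fin D → ℝ)) ∩ convexHull ℝ (Xout : Set (Fin D → ℝ))).Nonempty) :
    ∃ c : (Fin D → ℝ) → ℝ,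
      (xj = ∑ i ∈ Xin.erase xj ∪ Xout, c i • i) ∧
      (∑ i ∈ Xin.erase xj ∪ Xout, c i = 1) ∧
      (∀ c' : (Fin D → ℝ) → ℝ,
        (xj = ∑ i ∈ Xin.erase xj ∪ Xout, c' i • i ∧ ∑ i ∈ Xin.erase xj ∪ Xout, c' i = 1) →
        ∑ i ∈ Xin.erase xj ∪ Xout, |c i| ≤ ∑ i ∈ Xin.erase xj ∪ Xout, |c' i|) ∧
      (∃ i ∈ Xout, c i ≠ 0) := by
  classical
  obtain ⟨z, hzA, hzconv⟩ := hint
  set S : Set (Fin D → ℝ) := ((Xin.erase xj : Finset _) : Set (Fin D → ℝ)) with hS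
  set K : Set (Fin D → ℝ) := convexHull ℝ S with hK
  have hspanK : affineSpan ℝ K = A := by rw [hK, affineSpan_convexHull]; exact hspan
  have hzK : z ∈ affineSpan ℝ K := hspanK ▸ hzA
  obtain ⟨y₀, hy₀int, hy₀⟩ := mem_intrinsicInterior.mp hx
  have hpK : xj ∈ affineSpan ℝ K := hy₀ ▸ y₀.2
  have hmem : ∀ t : ℝ, xj + t • (xj - z) ∈ affineSpan ℝ K := by
    intro t
    have := AffineSubspace.smul_vsub_vadd_mem _ t hpK hzK hpK
    simpa [vsub_eq_sub, vadd_eq_add, add_comm] using this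
  set f : ℝ → affineSpan ℝ K := fun t => ⟨xj + t • (xj - z), hmem t⟩ with hf
  have hfc : Continuous f := by
    apply Continuous.subtype_mk
    exact continuous_const.add (continuous_id.smul continuous_const)
  have hf0 : f 0 = y₀ := by
    apply Subtype.ext
    simp [hf, hy₀]
  have hopen : IsOpen (f ⁻¹' interior ((↑) ⁻¹' K : Set (affineSpan ℝ K))) :=
    isOpen_interior.preimage hfc
  have h0mem : (0 : ℝ) ∈ f ⁻¹' interior ((↑) ⁻¹' K : Set (affineSpan ℝ K)) := by
    simp only [Set.mem_preimage, hf0]; exact hy₀int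
  obtain ⟨ε, hε, hball⟩ := Metric.isOpen_iff.mp hopen 0 h0mem
  set t : ℝ := ε / 2 with ht
  have htpos : 0 < t := by positivity
  have htmem : t ∈ Metric.ball (0 : ℝ) ε := by
    simp only [Metric.mem_ball, dist_zero_right, Real.norm_eq_abs, ht]
    rw [abs_of_pos htpos]; linarith
  have hfti : f t ∈ interior ((↑) ⁻¹' K : Set (affineSpan ℝ K)) := hball htmem
  have hft : f t ∈ ((↑) ⁻¹' K : Set (affineSpan ℝ K)) := interior_subset hfti
  have hyK : xj + t • (xj - z) ∈ K := hft
  have hyK' : xj + t • (xj - z) ∈ convexHull ℝ ((Xin.erase xj : Finset _) : Set (Fin D → ℝ)) := hyK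
  rw [Finset.convexHull_eq, Set.mem_setOf_eq] at hyK'
  obtain ⟨a, ha0, ha1, hay⟩ := hyK'
  rw [Finset.convexHull_eq, Set.mem_setOf_eq] at hzconv
  obtain ⟨b, hb0, hb1, hbz⟩ := hzconv
  rw [Finset.centerMass_eq_of_sum_1 _ _ ha1] at hay
  rw [Finset.centerMass_eq_of_sum_1 _ _ hb1] at hbz
  simp only [id] at hay hbz
  have hdisj : Disjoint (Xin.erase xj) Xout := by
    rw [Finset.disjoint_left]
    intro i hi hiout
    exact hXout i hiout (hXin (Finset.mem_of_mem_erase hi))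
  set c : (Fin D → ℝ) → ℝ := fun i =>
    if i ∈ Xin.erase xj then (1 / (1 + t)) * a i else (t / (1 + t)) * b i with hc
  have h1t : (0 : ℝ) < 1 + t := by linarith
  have h1t' : (1 + t) ≠ 0 := ne_of_gt h1t
  have hcerase : ∀ i ∈ Xin.erase xj, c i = (1 / (1 + t)) * a i := by
    intro i hi; simp only [hc]; rw [if_pos hi]
  have hcout : ∀ i ∈ Xout, c i = (t / (1 + t)) * b i := by
    intro i hi
    have : i ∉ Xin.erase xj := fun h => (Finset.disjoint_left.mp hdisj h) hi
    simp only [hc]; rw [if_neg this]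
  have hc0 : ∀ i ∈ Xin.erase xj ∪ Xout, 0 ≤ c i := by
    intro i hi
    rcases Finset.mem_union.mp hi with h | h
    · rw [hcerase i h]
      exact mul_nonneg (by positivity) (ha0 i h)
    · rw [hcout i h]
      exact mul_nonneg (by positivity) (hb0 i h)
  have hsum : ∑ i ∈ Xin.erase xj ∪ Xout, c i = 1 := by
    rw [Finset.sum_union hdisj, Finset.sum_congr rfl hcerase, Finset.sum_congr rfl hcout,
      ← Finset.mul_sum, ← Finset.mul_sum, ha1, hb1]
    field_simp
  have hrep : xj = ∑ i ∈ Xin.erase xj ∪ Xout, c i • i := by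
    rw [Finset.sum_union hdisj]
    have e1 : ∑ i ∈ Xin.erase xj, c i • i = (1 / (1 + t)) • (xj + t • (xj - z)) := by
      rw [← hay, Finset.smul_sum]
      refine Finset.sum_congr rfl fun i hi => ?_
      rw [hcerase i hi, mul_smul]
    have e2 : ∑ i ∈ Xout, c i • i = (t / (1 + t)) • z := by
      rw [← hbz, Finset.smul_sum]
      refine Finset.sum_congr rfl fun i hi => ?_
      rw [hcout i hi, mul_smul]
    rw [e1, e2]
    match_scalars <;> field_simp <;> ring
  refine ⟨c, hrep, hsum, ?_, ?_⟩
  · intro c' ⟨hrep', hsum'⟩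
    have h1 : ∑ i ∈ Xin.erase xj ∪ Xout, |c i| = 1 := by
      rw [← hsum]
      exact Finset.sum_congr rfl fun i hi => abs_of_nonneg (hc0 i hi)
    rw [h1]
    calc (1 : ℝ) = |∑ i ∈ Xin.erase xj ∪ Xout, c' i| := by rw [hsum']; simp
    _ ≤ ∑ i ∈ Xin.erase xj ∪ Xout, |c' i| := Finset.abs_sum_le_sum_abs _ _
  · obtain ⟨k, hk, hbk⟩ := Finset.exists_ne_zero_of_sum_ne_zero (by rw [hb1]; norm_num :
      ∑ y ∈ Xout, b y ≠ 0)
    refine ⟨k, hk, ?_⟩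
    rw [hcout k hk]
    positivity
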